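/- Let N ≥ 1 be an integer and s ∈ ℂ. The double series Σ_{l=0}^{∞} Σ_{k=0}^{∞} [k+1 over k+1−l] |s|^{2k} N^{−l} / (k! (k+1)!) converges, and the bilateral Laplace transform of the GUE mean eigenvalue density admits the convergent 1/N expansion ∫_{−∞}^{∞} e^{s t} p_N(t) dt = e^{s²/(2N)} · Σ_{l=0}^{∞} (−1)^l N^{−l} · ( Σ_{k=0}^{∞} [k+1 over k+1−l] s^{2k} / (k! (k+1)!) ). -/

import Mathlib

open MeasureTheory Real Filter Finset
open Polynomial

/-- Hermite polynomials with parameter `N`. -/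
noncomputable def hermN (N k : ℕ) (x : ℝ) : ℝ :=
  (-1 : ℝ) ^ k * Real.exp (N * x ^ 2 / 2) *
    iteratedDeriv k (fun y : ℝ => Real.exp (-(N * y ^ 2) / 2)) x

/-- Normalized Hermite polynomials. -/
noncomputable def htilde (N k : ℕ) (x : ℝ) : ℝ :=
  hermN N k x / Real.sqrt (k.factorial * N ^ k * Real.sqrt (2 * Real.pi / N))

/-- The mean eigenvalue density of the GUE(N) ensemble. -/
noncomputable def gueDensity (N : ℕ) (t : ℝ) : ℝ :=
  (1 / N) * Real.exp (-(N * t ^ 2) / 2) * ∑ k ∈ Finset.range N, (htilde N k t) ^ 2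

/-- Unsigned Stirling numbers of the first kind: `stirling1 n k` is the number of
permutations of an `n`-element set with exactly `k` disjoint cycles.  They satisfy
`[0,0] = 1`, `[0,k+1] = 0`, and the recurrence `[n+1,k] = n·[n,k] + [n,k−1]`. -/
def stirling1 : ℕ → ℕ → ℕ
  | 0, 0 => 1
  | 0, _ + 1 => 0
  | n + 1, 0 => n * stirling1 n 0
  | n + 1, k + 1 => n * stirling1 n (k + 1) + stirling1 n k

noncomputable def Qp (N : ℕ) : ℕ → Polynomial ℝ
  | 0 => 1
  | k + 1 => Polynomial.C (N : ℝ) * Polynomial.X * Qp N k - Polynomial.derivative (Qp N k)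

lemma Qp_succ (N k : ℕ) : Qp N (k + 1) = C (N : ℝ) * X * Qp N k - derivative (Qp N k) := rfl

lemma Qp_deriv (N : ℕ) : ∀ k, derivative (Qp N k) = C ((N : ℝ) * k) * Qp N (k - 1)
  | 0 => by simp [Qp]
  | (k + 1) => by
    rw [Qp_succ, derivative_sub, derivative_mul, derivative_mul, derivative_C, derivative_X,
      Qp_deriv N k]
    cases k with
    | zero => simp [Qp]
    | succ j =>
      rw [derivative_mul, derivative_C, Nat.add_sub_cancel, Nat.add_sub_cancel, Qp_succ]
      push_cast [C_add, C_mul, C_1]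
      ring

lemma gauss_hasDerivAt (N : ℕ) (x : ℝ) :
    HasDerivAt (fun y : ℝ => Real.exp (-(N * y ^ 2) / 2))
      (-((N : ℝ) * x) * Real.exp (-(N * x ^ 2) / 2)) x := by
  have h : HasDerivAt (fun y : ℝ => -((N : ℝ) * y ^ 2) / 2) (-((N : ℝ) * x)) x := by
    have := ((hasDerivAt_pow 2 x).const_mul (N : ℝ)).neg.div_const 2
    refine this.congr_deriv ?_
    ring
  simpa [mul_comm] using h.exp

lemma iteratedDeriv_gauss (N : ℕ) (k : ℕ) :
    iteratedDeriv k (fun y : ℝ => Real.exp (-(N * y ^ 2) / 2))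
      = fun x => (-1 : ℝ) ^ k * (Qp N k).eval x * Real.exp (-(N * x ^ 2) / 2) := by
  induction k with
  | zero => funext x; simp [Qp]
  | succ k IH =>
    rw [iteratedDeriv_succ, IH]
    funext x
    have h1 : HasDerivAt (fun x : ℝ => (-1 : ℝ) ^ k * (Qp N k).eval x
        * Real.exp (-(N * x ^ 2) / 2))
        ((-1 : ℝ) ^ k * ((Qp N k).derivative.eval x * Real.exp (-(N * x ^ 2) / 2)
          + (Qp N k).eval x * (-((N : ℝ) * x) * Real.exp (-(N * x ^ 2) / 2)))) x := by
      have h0 := (((Qp N k).hasDerivAt x).mul (gauss_hasDerivAt N x)).const_mul ((-1 : ℝ) ^ k)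
      simp only [← mul_assoc] at h0
      refine (h0.congr_deriv ?_).congr_of_eventuallyEq (Filter.Eventually.of_forall fun y => ?_)
      · ring
      · simp only [Pi.mul_apply]; ring
    rw [h1.deriv]
    have h2 : (Qp N (k + 1)).eval x = (N : ℝ) * x * (Qp N k).eval x
        - (Qp N k).derivative.eval x := by
      rw [Qp_succ]; simp
    rw [h2]
    ring

lemma hermN_eq_eval (N k : ℕ) (x : ℝ) : hermN N k x = (Qp N k).eval x := by
  rw [hermN, iteratedDeriv_gauss]
  have h4 : Real.exp ((N : ℝ) * x ^ 2 / 2) * Real.exp (-((N : ℝ) * x ^ 2) / 2) = 1 := by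
    rw [← Real.exp_add]; rw [show (N : ℝ) * x ^ 2 / 2 + -((N : ℝ) * x ^ 2) / 2 = 0 by ring]
    exact Real.exp_zero
  have h5 : (-1 : ℝ) ^ k * (-1 : ℝ) ^ k = 1 := by rw [← mul_pow]; norm_num
  linear_combination ((Qp N k).eval x) * ((-1 : ℝ) ^ k * (-1 : ℝ) ^ k) * h4
    + ((Qp N k).eval x) * h5

lemma integrable_exp_lin_quad (a : ℝ) {c : ℝ} (hc : 0 < c) :
    Integrable fun t : ℝ => Real.exp (a * t - c * t ^ 2) := by
  have h := ((integrable_exp_neg_mul_sq hc).comp_sub_right (a / (2 * c))).const_mul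
    (Real.exp (a ^ 2 / (4 * c)))
  apply h.congr
  refine Filter.EventuallyEq.symm (Filter.Eventually.of_forall fun t => ?_)
  show Real.exp (a * t - c * t ^ 2) = Real.exp (a ^ 2 / (4 * c)) * Real.exp (-c * (t - a / (2 * c)) ^ 2)
  rw [← Real.exp_add]
  congr 1
  field_simp
  ring

lemma abs_pow_le_factorial_mul_exp (x : ℝ) (n : ℕ) :
    |x| ^ n ≤ n.factorial * Real.exp |x| := by
  have h1 : |x| ^ n / n.factorial ≤ Real.exp |x| := by
    calc |x| ^ n / n.factorial
        ≤ ∑ i ∈ range (n + 1), |x| ^ i / i.factorial := by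
          refine Finset.single_le_sum (f := fun i => |x| ^ i / i.factorial)
            (fun i _ => by positivity) (self_mem_range_succ n)
      _ ≤ Real.exp |x| := Real.sum_le_exp_of_nonneg (abs_nonneg x) (n + 1)
  have hn : (0 : ℝ) < n.factorial := by positivity
  calc |x| ^ n = n.factorial * (|x| ^ n / n.factorial) := by field_simp
    _ ≤ n.factorial * Real.exp |x| := mul_le_mul_of_nonneg_left h1 hn.le

lemma integrable_pow_exp_lin_quad (n : ℕ) (a : ℝ) {c : ℝ} (hc : 0 < c) :
    Integrable fun t : ℝ => t ^ n * Real.exp (a * t - c * t ^ 2) := by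
  have hg : Integrable fun t : ℝ => (n.factorial : ℝ) *
      (Real.exp ((a + 1) * t - c * t ^ 2) + Real.exp ((a - 1) * t - c * t ^ 2)) :=
    ((integrable_exp_lin_quad (a + 1) hc).add (integrable_exp_lin_quad (a - 1) hc)).const_mul _
  refine hg.mono' ?_ (Filter.Eventually.of_forall fun t => ?_)
  · exact ((continuous_pow n).mul
      (Real.continuous_exp.comp (by fun_prop))).aestronglyMeasurable
  · have h1 : ‖t ^ n * Real.exp (a * t - c * t ^ 2)‖
        = |t| ^ n * Real.exp (a * t - c * t ^ 2) := by
      rw [norm_mul, norm_pow]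
      simp [Real.abs_exp]
    rw [h1]
    have h2 : |t| ^ n * Real.exp (a * t - c * t ^ 2)
        ≤ (n.factorial : ℝ) * Real.exp (|t| + (a * t - c * t ^ 2)) := by
      rw [Real.exp_add, ← mul_assoc]
      exact mul_le_mul_of_nonneg_right
        (abs_pow_le_factorial_mul_exp t n) (Real.exp_pos _).le
    refine h2.trans ?_
    rw [mul_add]
    rcases abs_cases t with ⟨h, _⟩ | ⟨h, _⟩
    · rw [h]
      have : t + (a * t - c * t ^ 2) = (a + 1) * t - c * t ^ 2 := by ring
      rw [this]
      nlinarith [Real.exp_pos ((a - 1) * t - c * t ^ 2), (Nat.cast_pos (α := ℝ)).2 n.factorial_pos]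
    · rw [h]
      have : -t + (a * t - c * t ^ 2) = (a - 1) * t - c * t ^ 2 := by ring
      rw [this]
      nlinarith [Real.exp_pos ((a + 1) * t - c * t ^ 2), (Nat.cast_pos (α := ℝ)).2 n.factorial_pos]

lemma integrable_poly_exp_lin_quad (p : Polynomial ℝ) (a : ℝ) {c : ℝ} (hc : 0 < c) :
    Integrable fun t : ℝ => p.eval t * Real.exp (a * t - c * t ^ 2) := by
  induction p using Polynomial.induction_on' with
  | add p q hp hq =>
    refine (hp.add hq).congr (Filter.Eventually.of_forall fun t => ?_); simp [add_mul]
  | monomial n b =>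
      simpa [eval_monomial, mul_assoc] using (integrable_pow_exp_lin_quad n a hc).const_mul b

noncomputable def gg (N : ℕ) (s : ℂ) (p : Polynomial ℝ) (t : ℝ) : ℂ :=
  Complex.exp (s * t) * ((Real.exp (-(N * t ^ 2) / 2) * p.eval t : ℝ) : ℂ)

lemma continuous_gg (N : ℕ) (s : ℂ) (p : Polynomial ℝ) : Continuous (gg N s p) := by
  unfold gg
  refine (Complex.continuous_exp.comp (continuous_const.mul Complex.continuous_ofReal)).mul
    (Complex.continuous_ofReal.comp ((Real.continuous_exp.comp (by fun_prop)).mul p.continuous))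

lemma integrable_gg (N : ℕ) (hN : 0 < N) (s : ℂ) (p : Polynomial ℝ) :
    Integrable (gg N s p) := by
  have hc : (0 : ℝ) < (N : ℝ) / 2 := by positivity
  have hg := (integrable_poly_exp_lin_quad p s.re hc).abs
  refine hg.mono' (continuous_gg N s p).aestronglyMeasurable
    (Filter.Eventually.of_forall fun t => ?_)
  have h1 : (s * (t : ℂ)).re = s.re * t := by simp [Complex.mul_re]
  rw [gg, norm_mul, Complex.norm_exp, h1, Complex.norm_real,
    Real.norm_eq_abs, abs_mul, Real.abs_exp, abs_mul, Real.abs_exp]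
  rw [← mul_assoc, ← Real.exp_add, mul_comm]
  exact mul_le_mul_of_nonneg_left (le_of_eq (congrArg Real.exp (by ring))) (abs_nonneg _)

lemma gg_one_integral (N : ℕ) (hN : 0 < N) (s : ℂ) :
    ∫ t : ℝ, gg N s 1 t
      = (Real.sqrt (2 * π / N) : ℂ) * Complex.exp (s ^ 2 / (2 * N)) := by
  have hN0 : (N : ℂ) ≠ 0 := Nat.cast_ne_zero.2 hN.ne'
  have hb : (-(N : ℂ) / 2).re < 0 := by
    rw [show -(N : ℂ) / 2 = ((-(N : ℝ) / 2 : ℝ) : ℂ) by push_cast; ring, Complex.ofReal_re]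
    have : (0 : ℝ) < N := by exact_mod_cast hN
    linarith
  have h := integral_cexp_quadratic hb s 0
  have heq : ∀ t : ℝ, gg N s 1 t = Complex.exp (-(N : ℂ) / 2 * t ^ 2 + s * t + 0) := by
    intro t
    rw [gg]
    simp only [Polynomial.eval_one, mul_one]
    rw [Complex.ofReal_exp, ← Complex.exp_add]
    congr 1
    push_cast [Polynomial.eval_mul]
    ring
  rw [integral_congr_ae (Filter.Eventually.of_forall heq), h]
  congr 1
  · have e1 : (↑π / -(-(N : ℂ) / 2)) = ((2 * π / N : ℝ) : ℂ) := by
      push_cast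
      field_simp
    rw [e1, show (1 / 2 : ℂ) = ((1 / 2 : ℝ) : ℂ) by norm_num,
      ← Complex.ofReal_cpow (by positivity) (1 / 2 : ℝ)]
    rw [Real.sqrt_eq_rpow]
  · congr 1
    field_simp
    ring

lemma gg_rec (N : ℕ) (hN : 0 < N) (s : ℂ) (j k : ℕ) :
    ∫ t : ℝ, gg N s (Qp N j * Qp N (k + 1)) t
      = s * (∫ t : ℝ, gg N s (Qp N j * Qp N k) t)
        + (N : ℂ) * j * ∫ t : ℝ, gg N s (Qp N (j - 1) * Qp N k) t := by
  set u : ℝ → ℂ := fun t => Complex.exp (s * t) * (((Qp N j).eval t : ℝ) : ℂ) with hu_def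
  set u' : ℝ → ℂ := fun t => Complex.exp (s * t) *
    (s * (((Qp N j).eval t : ℝ) : ℂ) + (N : ℂ) * j * (((Qp N (j - 1)).eval t : ℝ) : ℂ)) with hu'_def
  set v : ℝ → ℂ := fun t => ((Real.exp (-(N * t ^ 2) / 2) * (Qp N k).eval t : ℝ) : ℂ) with hv_def
  set v' : ℝ → ℂ := fun t =>
    -((Real.exp (-(N * t ^ 2) / 2) * (Qp N (k + 1)).eval t : ℝ) : ℂ) with hv'_def
  have hu : ∀ t : ℝ, HasDerivAt u (u' t) t := by
    intro t
    have h1 : HasDerivAt (fun t : ℝ => Complex.exp (s * t)) (Complex.exp (s * t) * s) t := by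
      have h0 : HasDerivAt (fun t : ℝ => s * (t : ℂ)) (s * 1) t :=
        (Complex.ofRealCLM.hasDerivAt).const_mul s
      simpa using h0.cexp
    have h2 : HasDerivAt (fun t : ℝ => (((Qp N j).eval t : ℝ) : ℂ))
        (((Qp N j).derivative.eval t : ℝ) : ℂ) t := ((Qp N j).hasDerivAt t).ofReal_comp
    have h3 := h1.mul h2
    have h4 : ((Qp N j).derivative.eval t : ℝ) = (N : ℝ) * j * (Qp N (j - 1)).eval t := by
      rw [Qp_deriv]; simp
    rw [hu_def, hu'_def]
    refine h3.congr_deriv ?_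
    rw [h4]
    push_cast [Polynomial.eval_mul]
    ring
  have hv : ∀ t : ℝ, HasDerivAt v (v' t) t := by
    intro t
    have h1 : HasDerivAt (fun t : ℝ => Real.exp (-(N * t ^ 2) / 2) * (Qp N k).eval t)
        (-(Real.exp (-(N * t ^ 2) / 2) * (Qp N (k + 1)).eval t)) t := by
      have h2 := (gauss_hasDerivAt N t).mul ((Qp N k).hasDerivAt t)
      refine h2.congr_deriv ?_
      rw [Qp_succ]
      simp only [Polynomial.eval_sub, Polynomial.eval_mul, Polynomial.eval_C, Polynomial.eval_X]
      ring
    simp only [hv_def, hv'_def, ← Complex.ofReal_neg]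
    exact h1.ofReal_comp
  have hint1 : Integrable (u * v') := by
    have := (integrable_gg N hN s (Qp N j * Qp N (k + 1))).neg
    apply this.congr
    refine Filter.Eventually.of_forall fun t => ?_
    show -gg N s (Qp N j * Qp N (k + 1)) t = u t * v' t
    rw [gg, hu_def, hv'_def]
    push_cast [Polynomial.eval_mul]
    ring
  have hint2 : Integrable (u' * v) := by
    have h5 := ((integrable_gg N hN s (Qp N j * Qp N k)).const_mul s).add
      ((integrable_gg N hN s (Qp N (j - 1) * Qp N k)).const_mul ((N : ℂ) * j))
    apply h5.congr
    refine Filter.Eventually.of_forall fun t => ?_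
    show s * gg N s (Qp N j * Qp N k) t + (N : ℂ) * j * gg N s (Qp N (j - 1) * Qp N k) t
      = u' t * v t
    rw [gg, gg, hu'_def, hv_def]
    push_cast [Polynomial.eval_mul]
    ring
  have hint3 : Integrable (u * v) := by
    apply (integrable_gg N hN s (Qp N j * Qp N k)).congr
    refine Filter.Eventually.of_forall fun t => ?_
    show gg N s (Qp N j * Qp N k) t = u t * v t
    rw [gg, hu_def, hv_def]
    push_cast [Polynomial.eval_mul]
    ring
  have key := integral_mul_deriv_eq_deriv_mul_of_integrable (fun t _ => hu t) (fun t _ => hv t) hint1 hint2 hint3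
  have e1 : ∫ t : ℝ, u t * v' t = -∫ t : ℝ, gg N s (Qp N j * Qp N (k + 1)) t := by
    rw [← integral_neg]
    refine integral_congr_ae (Filter.Eventually.of_forall fun t => ?_)
    show u t * v' t = -gg N s (Qp N j * Qp N (k + 1)) t
    rw [gg, hu_def, hv'_def]
    push_cast [Polynomial.eval_mul]
    ring
  have e2 : ∫ t : ℝ, u' t * v t = s * (∫ t : ℝ, gg N s (Qp N j * Qp N k) t)
      + (N : ℂ) * j * ∫ t : ℝ, gg N s (Qp N (j - 1) * Qp N k) t := by
    rw [← MeasureTheory.integral_const_mul, ← MeasureTheory.integral_const_mul, ← integral_add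
      ((integrable_gg N hN s (Qp N j * Qp N k)).const_mul s)
      ((integrable_gg N hN s (Qp N (j - 1) * Qp N k)).const_mul ((N : ℂ) * j))]
    refine integral_congr_ae (Filter.Eventually.of_forall fun t => ?_)
    show u' t * v t = s * gg N s (Qp N j * Qp N k) t
      + (N : ℂ) * j * gg N s (Qp N (j - 1) * Qp N k) t
    rw [gg, gg, hu'_def, hv_def]
    push_cast [Polynomial.eval_mul]
    ring
  rw [e1, e2] at key
  have key2 : -∫ t : ℝ, gg N s (Qp N j * Qp N (k + 1)) t
      = -(s * (∫ t : ℝ, gg N s (Qp N j * Qp N k) t)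
        + (N : ℂ) * j * ∫ t : ℝ, gg N s (Qp N (j - 1) * Qp N k) t) := by
    rw [key]
  have key3 := neg_injective key2
  exact key3

noncomputable def Sc (N : ℕ) (s : ℂ) (j k : ℕ) : ℂ :=
  ∑ m ∈ range (k + 1), (N : ℂ) ^ m * (m.factorial : ℂ) * (j.choose m : ℂ)
    * (k.choose m : ℂ) * s ^ (j - m) * s ^ (k - m)

lemma fact_choose (j m : ℕ) :
    (m + 1).factorial * j.choose (m + 1) = j * (m.factorial * (j - 1).choose m) := by
  cases j with
  | zero => simp
  | succ j =>
    have h := Nat.add_one_mul_choose_eq j m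
    simp only [Nat.add_sub_cancel]
    calc (m + 1).factorial * (j + 1).choose (m + 1)
        = m.factorial * ((j + 1).choose (m + 1) * (m + 1)) := by
          rw [Nat.factorial_succ]; ring
      _ = m.factorial * ((j + 1) * j.choose m) := by rw [← h]
      _ = (j + 1) * (m.factorial * j.choose m) := by ring

lemma Sc_rec (N : ℕ) (s : ℂ) (j k : ℕ) :
    Sc N s j (k + 1) = s * Sc N s j k + (N : ℂ) * j * Sc N s (j - 1) k := by
  unfold Sc
  rw [Finset.sum_range_succ']
  have step : ∀ m ∈ range (k + 1),
      (N : ℂ) ^ (m + 1) * ((m + 1).factorial : ℂ) * (j.choose (m + 1) : ℂ)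
        * ((k + 1).choose (m + 1) : ℂ) * s ^ (j - (m + 1)) * s ^ (k + 1 - (m + 1))
      = (N : ℂ) ^ (m + 1) * ((m + 1).factorial : ℂ) * (j.choose (m + 1) : ℂ)
          * (k.choose (m + 1) : ℂ) * s ^ (j - (m + 1)) * s ^ (k - m)
        + (N : ℂ) * j * ((N : ℂ) ^ m * (m.factorial : ℂ) * ((j - 1).choose m : ℂ)
          * (k.choose m : ℂ) * s ^ (j - 1 - m) * s ^ (k - m)) := by
    intro m _
    have hc : (((k + 1).choose (m + 1) : ℕ) : ℂ)
        = (k.choose (m + 1) : ℂ) + (k.choose m : ℂ) := by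
      rw [Nat.choose_succ_succ']
      push_cast
      ring
    have hf : (((m + 1).factorial : ℕ) : ℂ) * (j.choose (m + 1) : ℂ)
        = (j : ℂ) * ((m.factorial : ℂ) * ((j - 1).choose m : ℂ)) := by
      exact_mod_cast congrArg (Nat.cast : ℕ → ℂ) (fact_choose j m)
    have hs : j - (m + 1) = j - 1 - m := by omega
    have hs2 : k + 1 - (m + 1) = k - m := by omega
    rw [hs, hs2, hc]
    linear_combination ((N : ℂ) ^ m * (N : ℂ) * (k.choose m : ℂ)
      * s ^ (j - 1 - m) * s ^ (k - m)) * hf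
  rw [Finset.sum_congr rfl step, Finset.sum_add_distrib]
  have e1 : ∑ m ∈ range (k + 1), (N : ℂ) * j * ((N : ℂ) ^ m * (m.factorial : ℂ)
      * ((j - 1).choose m : ℂ) * (k.choose m : ℂ) * s ^ (j - 1 - m) * s ^ (k - m))
      = (N : ℂ) * j * ∑ m ∈ range (k + 1), (N : ℂ) ^ m * (m.factorial : ℂ)
        * ((j - 1).choose m : ℂ) * (k.choose m : ℂ) * s ^ (j - 1 - m) * s ^ (k - m) :=
    (Finset.mul_sum _ _ _).symm
  rw [e1]
  have e2 : s * ∑ m ∈ range (k + 1), (N : ℂ) ^ m * (m.factorial : ℂ) * (j.choose m : ℂ)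
      * (k.choose m : ℂ) * s ^ (j - m) * s ^ (k - m)
      = (∑ m ∈ range k, (N : ℂ) ^ (m + 1) * ((m + 1).factorial : ℂ) * (j.choose (m + 1) : ℂ)
          * (k.choose (m + 1) : ℂ) * s ^ (j - (m + 1)) * s ^ (k - m))
        + (N : ℂ) ^ 0 * ((0).factorial : ℂ) * (j.choose 0 : ℂ) * ((k + 1).choose 0 : ℂ)
          * s ^ (j - 0) * s ^ (k + 1 - 0) := by
    rw [Finset.mul_sum, Finset.sum_range_succ']
    congr 1
    · refine Finset.sum_congr rfl fun m hm => ?_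
      have hm' : m < k := mem_range.1 hm
      have : k - m = (k - (m + 1)) + 1 := by omega
      rw [this, pow_succ]
      ring
    · simp only [Nat.choose_zero_right, Nat.sub_zero, pow_zero, Nat.factorial_zero]
      rw [pow_succ]
      push_cast
      ring
  rw [e2]
  have e3 : ∑ m ∈ range (k + 1), (N : ℂ) ^ (m + 1) * ((m + 1).factorial : ℂ)
      * (j.choose (m + 1) : ℂ) * (k.choose (m + 1) : ℂ) * s ^ (j - (m + 1)) * s ^ (k - m)
      = ∑ m ∈ range k, (N : ℂ) ^ (m + 1) * ((m + 1).factorial : ℂ)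
      * (j.choose (m + 1) : ℂ) * (k.choose (m + 1) : ℂ) * s ^ (j - (m + 1)) * s ^ (k - m) := by
    rw [Finset.sum_range_succ]
    simp [Nat.choose_eq_zero_of_lt]
  rw [e3]
  ring

lemma Sc_zero (N : ℕ) (s : ℂ) (j : ℕ) : Sc N s j 0 = s ^ j := by
  simp [Sc]

lemma gg_Qp_integral (N : ℕ) (hN : 0 < N) (s : ℂ) :
    ∀ k j, ∫ t : ℝ, gg N s (Qp N j * Qp N k) t
      = (Real.sqrt (2 * π / N) : ℂ) * Complex.exp (s ^ 2 / (2 * N)) * Sc N s j k := by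
  intro k
  induction k with
  | zero =>
    intro j
    induction j with
    | zero =>
      rw [show Qp N 0 * Qp N 0 = 1 by rw [show Qp N 0 = 1 from rfl]; ring, Sc_zero,
        gg_one_integral N hN s]
      simp
    | succ j IHj =>
      rw [mul_comm (Qp N (j + 1)) (Qp N 0), gg_rec N hN s 0 j,
        mul_comm (Qp N 0) (Qp N j), IHj, Sc_zero, Sc_zero]
      push_cast
      ring
  | succ k IHk =>
    intro j
    rw [gg_rec N hN s j k, IHk j, IHk (j - 1), Sc_rec]
    ring

lemma integral_gue (N : ℕ) (hN : 0 < N) (s : ℂ) :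
    ∫ t : ℝ, Complex.exp (s * t) * (gueDensity N t : ℂ)
      = Complex.exp (s ^ 2 / (2 * N))
        * ∑ k ∈ range N, (1 / ((N : ℂ) ^ (k + 1) * (k.factorial : ℂ))) * Sc N s k k := by
  have hNR : (0 : ℝ) < N := by exact_mod_cast hN
  have hsq : (0 : ℝ) < Real.sqrt (2 * π / N) := Real.sqrt_pos.2 (by positivity)
  set d : ℕ → ℝ := fun k => (k.factorial : ℝ) * (N : ℝ) ^ k * Real.sqrt (2 * π / N) with hd
  have hd_pos : ∀ k, 0 < d k := fun k => by
    have : (0 : ℝ) < (k.factorial : ℝ) := by positivity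
    positivity
  have hpt : ∀ t : ℝ, Complex.exp (s * t) * (gueDensity N t : ℂ)
      = ∑ k ∈ range N, ((1 / ((N : ℝ) * d k) : ℝ) : ℂ) * gg N s (Qp N k * Qp N k) t := by
    intro t
    rw [gueDensity, Finset.mul_sum]
    push_cast
    rw [Finset.mul_sum]
    refine Finset.sum_congr rfl fun k _ => ?_
    rw [htilde, hermN_eq_eval, gg]
    have hdkC : ((d k : ℝ) : ℂ) = ((Real.sqrt (d k) : ℝ) : ℂ) ^ 2 := by
      rw [← Complex.ofReal_pow, Real.sq_sqrt (hd_pos k).le]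
    have hw : ((Real.sqrt (d k) : ℝ) : ℂ) ≠ 0 := by
      simpa using (Real.sqrt_pos.2 (hd_pos k)).ne'
    have hNC : (N : ℂ) ≠ 0 := Nat.cast_ne_zero.2 hN.ne'
    push_cast [Polynomial.eval_mul]
    rw [show Real.sqrt ((k.factorial : ℝ) * (N : ℝ) ^ k * Real.sqrt (2 * π / N))
        = Real.sqrt (d k) from rfl]
    rw [hdkC]
    field_simp
  rw [integral_congr_ae (Filter.Eventually.of_forall hpt)]
  rw [integral_finset_sum _ fun k _ =>
    ((integrable_gg N hN s (Qp N k * Qp N k)).const_mul _)]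
  rw [Finset.mul_sum]
  refine Finset.sum_congr rfl fun k _ => ?_
  rw [MeasureTheory.integral_const_mul, gg_Qp_integral N hN s k k]
  have hNC : (N : ℂ) ≠ 0 := Nat.cast_ne_zero.2 hN.ne'
  have hsqC : ((Real.sqrt (2 * π / N) : ℝ) : ℂ) ≠ 0 := by simpa using hsq.ne'
  have hfC : (k.factorial : ℂ) ≠ 0 := by exact_mod_cast k.factorial_ne_zero
  set w : ℝ := Real.sqrt (2 * π / N) with hwdef
  have hw0 : (w : ℂ) ≠ 0 := by simpa using hsq.ne'
  have hdk : d k = (k.factorial : ℝ) * (N : ℝ) ^ k * w := rfl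
  have hcoef : ((1 / ((N : ℝ) * d k) : ℝ) : ℂ) * (w : ℂ)
      = 1 / ((N : ℂ) ^ (k + 1) * (k.factorial : ℂ)) := by
    rw [hdk]
    push_cast
    have h1 : (N : ℂ) * ((k.factorial : ℂ) * (N : ℂ) ^ k * (w : ℂ)) ≠ 0 :=
      mul_ne_zero hNC (mul_ne_zero (mul_ne_zero hfC (pow_ne_zero _ hNC)) hw0)
    have h2 : (N : ℂ) ^ (k + 1) * (k.factorial : ℂ) ≠ 0 :=
      mul_ne_zero (pow_ne_zero _ hNC) hfC
    rw [div_mul_eq_mul_div, one_mul, div_eq_div_iff h1 h2, pow_succ]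
    ring
  calc ((1 / ((N : ℝ) * d k) : ℝ) : ℂ)
        * ((w : ℂ) * Complex.exp (s ^ 2 / (2 * N)) * Sc N s k k)
      = (((1 / ((N : ℝ) * d k) : ℝ) : ℂ) * (w : ℂ))
        * (Complex.exp (s ^ 2 / (2 * N)) * Sc N s k k) := by ring
    _ = Complex.exp (s ^ 2 / (2 * N))
        * (1 / ((N : ℂ) ^ (k + 1) * (k.factorial : ℂ)) * Sc N s k k) := by
          rw [hcoef]; ring

lemma stirling1_succ_zero : ∀ n : ℕ, stirling1 (n + 1) 0 = 0
  | 0 => rfl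
  | n + 1 => by
    show (n + 1) * stirling1 (n + 1) 0 = 0
    rw [stirling1_succ_zero n, mul_zero]

lemma mul_stirling1_zero (n : ℕ) : n * stirling1 n 0 = 0 := by
  cases n with
  | zero => rfl
  | succ n => rw [stirling1_succ_zero n, mul_zero]

lemma stirling1_eq_zero_of_lt : ∀ n k : ℕ, n < k → stirling1 n k = 0
  | 0, k + 1, _ => rfl
  | n + 1, k + 1, h => by
    show n * stirling1 n (k + 1) + stirling1 n k = 0
    rw [stirling1_eq_zero_of_lt n (k + 1) (by omega), stirling1_eq_zero_of_lt n k (by omega)]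
    simp

lemma sum_stirling1 : ∀ n : ℕ, ∑ j ∈ range (n + 1), stirling1 n j = n.factorial
  | 0 => rfl
  | n + 1 => by
    rw [Finset.sum_range_succ']
    have h1 : ∀ j, stirling1 (n + 1) (j + 1) = n * stirling1 n (j + 1) + stirling1 n j :=
      fun j => rfl
    simp only [h1]
    rw [Finset.sum_add_distrib, ← Finset.mul_sum, sum_stirling1 n]
    have h2 : ∑ j ∈ range (n + 1), stirling1 n (j + 1)
        = ∑ j ∈ range n, stirling1 n (j + 1) := by
      rw [Finset.sum_range_succ, stirling1_eq_zero_of_lt n (n + 1) (by omega), add_zero]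
    rw [h2, stirling1_succ_zero n, Nat.factorial_succ, Nat.succ_mul]
    have h3 : stirling1 n 0 + ∑ j ∈ range n, stirling1 n (j + 1) = n.factorial := by
      rw [← sum_stirling1 n, Finset.sum_range_succ']
      ring
    have h5 := mul_stirling1_zero n
    have h7 : n * stirling1 n 0 + n * (∑ j ∈ range n, stirling1 n (j + 1))
        = n * n.factorial := by
      rw [← Nat.mul_add, h3]
    omega

lemma stirling_poly (x : ℂ) : ∀ n : ℕ,
    ∑ j ∈ range (n + 1), (stirling1 n j : ℂ) * (-x) ^ j
      = ∏ i ∈ range n, ((i : ℂ) - x)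
  | 0 => by simp [stirling1]
  | n + 1 => by
    rw [Finset.sum_range_succ']
    have h1 : ∀ j, (stirling1 (n + 1) (j + 1) : ℂ)
        = (n : ℂ) * (stirling1 n (j + 1) : ℂ) + (stirling1 n j : ℂ) := by
      intro j
      show ((n * stirling1 n (j + 1) + stirling1 n j : ℕ) : ℂ) = _
      push_cast
      ring
    have h2 : ∀ j ∈ range (n + 1), (stirling1 (n + 1) (j + 1) : ℂ) * (-x) ^ (j + 1)
        = (n : ℂ) * ((stirling1 n (j + 1) : ℂ) * (-x) ^ (j + 1))
          + (-x) * ((stirling1 n j : ℂ) * (-x) ^ j) := by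
      intro j _
      rw [h1]
      rw [pow_succ]
      ring
    rw [Finset.sum_congr rfl h2, Finset.sum_add_distrib, ← Finset.mul_sum, ← Finset.mul_sum]
    have h5 : ∑ j ∈ range (n + 1), (stirling1 n (j + 1) : ℂ) * (-x) ^ (j + 1)
        = (∏ i ∈ range n, ((i : ℂ) - x)) - (stirling1 n 0 : ℂ) := by
      have h6 := stirling_poly x n
      rw [Finset.sum_range_succ'] at h6
      have h7 : ∑ j ∈ range n, (stirling1 n (j + 1) : ℂ) * (-x) ^ (j + 1)
          = ∑ j ∈ range (n + 1), (stirling1 n (j + 1) : ℂ) * (-x) ^ (j + 1) := by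
        rw [Finset.sum_range_succ, stirling1_eq_zero_of_lt n (n + 1) (by omega)]
        simp
      rw [h7] at h6
      rw [← h6]
      simp
    rw [h5, stirling_poly x n, stirling1_succ_zero n, Finset.prod_range_succ]
    have h8 : ((n : ℂ)) * (stirling1 n 0 : ℂ) = 0 := by
      have := mul_stirling1_zero n
      exact_mod_cast congrArg (Nat.cast : ℕ → ℂ) this
    push_cast
    linear_combination (-1 : ℂ) * h8

lemma stirling_reflect (N k : ℕ) :
    ∑ l ∈ range (k + 2), (-1 : ℂ) ^ l * (stirling1 (k + 1) (k + 1 - l) : ℂ)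
        * (N : ℂ) ^ (k + 1 - l)
      = ∏ i ∈ range (k + 1), ((N : ℂ) - (i : ℂ)) := by
  have hrefl := Finset.sum_range_reflect
    (fun l => (-1 : ℂ) ^ l * (stirling1 (k + 1) (k + 1 - l) : ℂ) * (N : ℂ) ^ (k + 1 - l)) (k + 2)
  rw [← hrefl]
  have hterm : ∀ j ∈ range (k + 2),
      (-1 : ℂ) ^ (k + 2 - 1 - j) * (stirling1 (k + 1) (k + 1 - (k + 2 - 1 - j)) : ℂ)
        * (N : ℂ) ^ (k + 1 - (k + 2 - 1 - j))
      = (-1 : ℂ) ^ (k + 1) * ((stirling1 (k + 1) j : ℂ) * (-(N : ℂ)) ^ j) := by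
    intro j hj
    have hj' : j ≤ k + 1 := by simpa using Nat.lt_succ_iff.1 (mem_range.1 hj)
    have hidx : k + 2 - 1 - j = k + 1 - j := by omega
    have hidx2 : k + 1 - (k + 1 - j) = j := by omega
    rw [hidx, hidx2, neg_pow]
    have e1 : (-1 : ℂ) ^ (k + 1 - j) * (-1 : ℂ) ^ j = (-1 : ℂ) ^ (k + 1) := by
      rw [← pow_add]
      congr 1
      omega
    have e2 : (-1 : ℂ) ^ j * (-1 : ℂ) ^ j = 1 := by
      rw [← pow_add, ← two_mul, pow_mul]
      norm_num
    linear_combination ((stirling1 (k + 1) j : ℂ) * (N : ℂ) ^ j * (-1 : ℂ) ^ j) * e1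
      - ((stirling1 (k + 1) j : ℂ) * (N : ℂ) ^ j * (-1 : ℂ) ^ (k + 1 - j)) * e2
  rw [Finset.sum_congr rfl hterm, ← Finset.mul_sum, stirling_poly (N : ℂ) (k + 1)]
  have hneg : ∀ i ∈ range (k + 1), ((i : ℂ) - (N : ℂ)) = (-1) * ((N : ℂ) - (i : ℂ)) :=
    fun i _ => by ring
  rw [Finset.prod_congr rfl hneg, Finset.prod_mul_distrib, Finset.prod_const, Finset.card_range,
    ← mul_assoc, ← mul_pow]
  norm_num

lemma Fc_eq_zero (N k : ℕ) (h : N ≤ k) :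
    ∏ i ∈ range (k + 1), ((N : ℂ) - (i : ℂ)) = 0 :=
  Finset.prod_eq_zero (Finset.mem_range.2 (by omega : N < k + 1)) (by simp)

lemma Fc_eq (N k : ℕ) (h : k < N) :
    ∏ i ∈ range (k + 1), ((N : ℂ) - (i : ℂ))
      = ((k + 1).factorial : ℂ) * (N.choose (k + 1) : ℂ) := by
  have h1 : ∀ i ∈ range (k + 1), ((N : ℂ) - (i : ℂ)) = ((N - i : ℕ) : ℂ) := fun i hi => by
    have hi' : i ≤ N := by have := Finset.mem_range.1 hi; omega
    rw [Nat.cast_sub hi']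
  rw [Finset.prod_congr rfl h1, ← Nat.cast_prod, ← Nat.descFactorial_eq_prod_range,
    Nat.descFactorial_eq_factorial_mul_choose]
  push_cast
  ring

lemma hockey (j N : ℕ) (h : j < N) :
    ∑ k ∈ Ico j N, (k.choose j : ℂ) = (N.choose (j + 1) : ℂ) := by
  obtain ⟨M, rfl⟩ : ∃ M, N = M + 1 := ⟨N - 1, by omega⟩
  rw [← Nat.cast_sum]
  rw [Finset.Ico_add_one_right_eq_Icc, Nat.sum_Icc_choose]

lemma Sc_diag (N : ℕ) (hN : 0 < N) (s : ℂ) (k : ℕ) :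
    1 / ((N : ℂ) ^ (k + 1) * (k.factorial : ℂ)) * Sc N s k k
      = ∑ j ∈ range (k + 1), s ^ (2 * j) * (k.choose j : ℂ)
          / ((j.factorial : ℂ) * (N : ℂ) ^ (j + 1)) := by
  have hN0 : (N : ℂ) ≠ 0 := Nat.cast_ne_zero.2 hN.ne'
  unfold Sc
  rw [Finset.mul_sum]
  rw [← Finset.sum_range_reflect]
  refine Finset.sum_congr rfl fun j hj => ?_
  have hjk : j ≤ k := by have := Finset.mem_range.1 hj; omega
  have hidx : k + 1 - 1 - j = k - j := by omega
  have hidx2 : k - (k - j) = j := by omega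
  rw [hidx, hidx2, Nat.choose_symm hjk]
  have hk! : (k.factorial : ℂ)
      = (k.choose j : ℂ) * (j.factorial : ℂ) * ((k - j).factorial : ℂ) := by
    exact_mod_cast congrArg (Nat.cast : ℕ → ℂ)
      (Nat.choose_mul_factorial_mul_factorial hjk).symm
  have hNpow : (N : ℂ) ^ (k + 1) = (N : ℂ) ^ (k - j) * (N : ℂ) ^ (j + 1) := by
    rw [← pow_add]
    congr 1
    omega
  have hs2 : s ^ (2 * j) = s ^ j * s ^ j := by rw [two_mul, pow_add]
  rw [hs2, hk!, hNpow]
  have hf1 : ((j.factorial : ℕ) : ℂ) ≠ 0 := by exact_mod_cast j.factorial_ne_zero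
  have hf2 : (((k - j).factorial : ℕ) : ℂ) ≠ 0 := by exact_mod_cast (k - j).factorial_ne_zero
  rcases eq_or_ne ((k.choose j : ℕ) : ℂ) 0 with hc | hc
  · rw [hc]; ring
  · field_simp

lemma sum_swap_tri (N : ℕ) (g : ℕ → ℕ → ℂ) :
    ∑ k ∈ range N, ∑ j ∈ range (k + 1), g j k
      = ∑ j ∈ range N, ∑ k ∈ Ico j N, g j k := by
  have h1 : ∀ k ∈ range N, ∑ j ∈ range (k + 1), g j k
      = ∑ j ∈ range N, if j ≤ k then g j k else 0 := by
    intro k hk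
    rw [← Finset.sum_filter]
    apply Finset.sum_congr _ fun _ _ => rfl
    ext j
    simp only [Finset.mem_filter, Finset.mem_range]
    have := Finset.mem_range.1 hk
    omega
  rw [Finset.sum_congr rfl h1, Finset.sum_comm]
  refine Finset.sum_congr rfl fun j hj => ?_
  rw [← Finset.sum_filter]
  apply Finset.sum_congr _ fun _ _ => rfl
  ext k
  simp only [Finset.mem_filter, Finset.mem_range, Finset.mem_Ico]
  omega

lemma comb_main (N : ℕ) (hN : 0 < N) (s : ℂ) :
    ∑ k ∈ range N, 1 / ((N : ℂ) ^ (k + 1) * (k.factorial : ℂ)) * Sc N s k k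
      = ∑ j ∈ range N, s ^ (2 * j) * (∏ i ∈ range (j + 1), ((N : ℂ) - (i : ℂ)))
          / (((j.factorial : ℂ) * ((j + 1).factorial : ℂ)) * (N : ℂ) ^ (j + 1)) := by
  have hN0 : (N : ℂ) ≠ 0 := Nat.cast_ne_zero.2 hN.ne'
  rw [Finset.sum_congr rfl fun k _ => Sc_diag N hN s k, sum_swap_tri]
  refine Finset.sum_congr rfl fun j hj => ?_
  have hjN : j < N := Finset.mem_range.1 hj
  have e1 : ∀ k ∈ Ico j N, s ^ (2 * j) * (k.choose j : ℂ)
      / ((j.factorial : ℂ) * (N : ℂ) ^ (j + 1))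
      = (k.choose j : ℂ) * (s ^ (2 * j) / ((j.factorial : ℂ) * (N : ℂ) ^ (j + 1))) :=
    fun k _ => by ring
  rw [Finset.sum_congr rfl e1, ← Finset.sum_mul, hockey j N hjN, Fc_eq N j hjN]
  have hf1 : ((j.factorial : ℕ) : ℂ) ≠ 0 := by exact_mod_cast j.factorial_ne_zero
  have hf2 : (((j + 1).factorial : ℕ) : ℂ) ≠ 0 := by exact_mod_cast (j + 1).factorial_ne_zero
  field_simp

lemma sum_stirling_row (k M : ℕ) :
    ∑ l ∈ range M, stirling1 (k + 1) (k + 1 - l) ≤ (k + 1).factorial := by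
  set M' := max M (k + 2) with hM'
  have h1 : ∑ l ∈ range M, stirling1 (k + 1) (k + 1 - l)
      ≤ ∑ l ∈ range M', stirling1 (k + 1) (k + 1 - l) :=
    Finset.sum_le_sum_of_subset (Finset.range_subset_range.2 (le_max_left _ _))
  refine h1.trans ?_
  have h2 : ∑ l ∈ range M', stirling1 (k + 1) (k + 1 - l)
      = ∑ l ∈ range (k + 2), stirling1 (k + 1) (k + 1 - l) := by
    refine (Finset.sum_subset (Finset.range_subset_range.2 (le_max_right _ _)) ?_).symm
    intro l _ hl
    have hl' : k + 2 ≤ l := by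
      by_contra h
      exact hl (Finset.mem_range.2 (by omega))
    rw [show k + 1 - l = 0 by omega]
    exact stirling1_succ_zero k
  rw [h2]
  have h3 := Finset.sum_range_reflect (fun j => stirling1 (k + 1) j) (k + 2)
  have h4 : ∑ l ∈ range (k + 2), stirling1 (k + 1) (k + 1 - l)
      = ∑ j ∈ range (k + 2), stirling1 (k + 1) j := by
    rw [← h3]
    exact Finset.sum_congr rfl fun l _ => by rw [show k + 2 - 1 - l = k + 1 - l by omega]
  rw [h4, sum_stirling1 (k + 1)]

lemma summable_part1 (N : ℕ) (hN : 1 ≤ N) (s : ℂ) :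
    Summable (fun p : ℕ × ℕ =>
      (stirling1 (p.2 + 1) (p.2 + 1 - p.1) : ℝ) * ‖s‖ ^ (2 * p.2) *
        (N : ℝ) ^ (-(p.1 : ℤ)) / (p.2.factorial * (p.2 + 1).factorial)) := by
  have hNR : (1 : ℝ) ≤ (N : ℝ) := by exact_mod_cast hN
  set f : ℕ × ℕ → ℝ := fun p =>
    (stirling1 (p.2 + 1) (p.2 + 1 - p.1) : ℝ) * ‖s‖ ^ (2 * p.2) *
      (N : ℝ) ^ (-(p.1 : ℤ)) / (p.2.factorial * (p.2 + 1).factorial) with hf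
  have hf0 : ∀ p, 0 ≤ f p := by
    intro p
    have h1 : (0 : ℝ) ≤ (N : ℝ) ^ (-(p.1 : ℤ)) := zpow_nonneg (by linarith) _
    have h2 : (0 : ℝ) ≤ (stirling1 (p.2 + 1) (p.2 + 1 - p.1) : ℝ) := Nat.cast_nonneg _
    have h3 : (0 : ℝ) ≤ ‖s‖ ^ (2 * p.2) := pow_nonneg (norm_nonneg s) _
    have h4 : (0 : ℝ) ≤ ((p.2.factorial : ℝ) * ((p.2 + 1).factorial : ℝ)) := by positivity
    exact div_nonneg (mul_nonneg (mul_nonneg h2 h3) h1) h4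
  apply summable_of_sum_le hf0 (c := Real.exp (‖s‖ ^ 2))
  intro u
  set M := (u.sup fun p => max p.1 p.2) + 1 with hM
  have hsub : u ⊆ range M ×ˢ range M := by
    intro p hp
    have hle : max p.1 p.2 ≤ u.sup fun p : ℕ × ℕ => max p.1 p.2 :=
      Finset.le_sup (f := fun p : ℕ × ℕ => max p.1 p.2) hp
    rw [Finset.mem_product, Finset.mem_range, Finset.mem_range]
    exact ⟨Nat.lt_succ_of_le (le_trans (le_max_left _ _) hle),
      Nat.lt_succ_of_le (le_trans (le_max_right _ _) hle)⟩
  refine le_trans (Finset.sum_le_sum_of_subset_of_nonneg hsub fun p _ _ => hf0 p) ?_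
  rw [Finset.sum_product_right]
  have hinner : ∀ k ∈ range M, ∑ l ∈ range M, f (l, k)
      ≤ ‖s‖ ^ (2 * k) / k.factorial := by
    intro k _
    have hb : ∀ l ∈ range M, f (l, k) ≤ (stirling1 (k + 1) (k + 1 - l) : ℝ)
        * (‖s‖ ^ (2 * k) / (k.factorial * (k + 1).factorial)) := by
      intro l _
      rw [hf]
      have hzle : (N : ℝ) ^ (-(l : ℤ)) ≤ 1 := by
        rw [zpow_neg, zpow_natCast]
        exact inv_le_one_of_one_le₀ (one_le_pow₀ hNR)
      have hst : (0 : ℝ) ≤ (stirling1 (k + 1) (k + 1 - l) : ℝ) := Nat.cast_nonneg _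
      have habs : (0 : ℝ) ≤ ‖s‖ ^ (2 * k) := pow_nonneg (norm_nonneg s) _
      have hden : (0 : ℝ) < ((k.factorial : ℝ) * ((k + 1).factorial : ℝ)) := by positivity
      simp only
      rw [div_le_iff₀ hden]
      calc (stirling1 (k + 1) (k + 1 - l) : ℝ) * ‖s‖ ^ (2 * k)
            * (N : ℝ) ^ (-(l : ℤ))
          ≤ (stirling1 (k + 1) (k + 1 - l) : ℝ) * ‖s‖ ^ (2 * k) * 1 := by
            exact mul_le_mul_of_nonneg_left hzle (mul_nonneg hst habs)
        _ = (stirling1 (k + 1) (k + 1 - l) : ℝ)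
            * (‖s‖ ^ (2 * k) / (k.factorial * (k + 1).factorial))
            * (k.factorial * (k + 1).factorial) := by
            field_simp
    refine le_trans (Finset.sum_le_sum hb) ?_
    rw [← Finset.sum_mul]
    have hrow : (∑ l ∈ range M, (stirling1 (k + 1) (k + 1 - l) : ℝ))
        ≤ ((k + 1).factorial : ℝ) := by
      rw [← Nat.cast_sum]
      exact_mod_cast sum_stirling_row k M
    have hpos : (0 : ℝ) ≤ ‖s‖ ^ (2 * k) / (k.factorial * (k + 1).factorial) := by
      positivity
    refine le_trans (mul_le_mul_of_nonneg_right hrow hpos) ?_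
    rw [le_div_iff₀ (by positivity : (0 : ℝ) < (k.factorial : ℝ))]
    have hne : ((k + 1).factorial : ℝ) ≠ 0 := by positivity
    have hne2 : (k.factorial : ℝ) ≠ 0 := by positivity
    exact le_of_eq (by field_simp)
  refine le_trans (Finset.sum_le_sum hinner) ?_
  have : ∀ k ∈ range M, ‖s‖ ^ (2 * k) / k.factorial
      = (‖s‖ ^ 2) ^ k / k.factorial := by
    intro k _
    rw [pow_mul]
  rw [Finset.sum_congr rfl this]
  exact Real.sum_le_exp_of_nonneg (by positivity) M


theorem laplace_one_over_N_expansion (N : ℕ) (hN : 1 ≤ N) (s : ℂ) :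
    Summable (fun p : ℕ × ℕ =>
      (stirling1 (p.2 + 1) (p.2 + 1 - p.1) : ℝ) * ‖s‖ ^ (2 * p.2) *
        (N : ℝ) ^ (-(p.1 : ℤ)) / (p.2.factorial * (p.2 + 1).factorial)) ∧
    (∫ t : ℝ, Complex.exp (s * t) * (gueDensity N t : ℂ)) =
      Complex.exp (s ^ 2 / (2 * N)) *
        ∑' l : ℕ, (-1 : ℂ) ^ l * (N : ℂ) ^ (-(l : ℤ)) *
          ∑' k : ℕ, (stirling1 (k + 1) (k + 1 - l) : ℂ) * s ^ (2 * k) /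
            (k.factorial * (k + 1).factorial) := by
  have hN0 : 0 < N := hN
  have hNC : (N : ℂ) ≠ 0 := Nat.cast_ne_zero.2 hN0.ne'
  refine ⟨summable_part1 N hN s, ?_⟩
  set F2 : ℕ → ℕ → ℂ := fun l k => (-1 : ℂ) ^ l * (N : ℂ) ^ (-(l : ℤ)) *
    ((stirling1 (k + 1) (k + 1 - l) : ℂ) * s ^ (2 * k) /
      ((k.factorial : ℂ) * ((k + 1).factorial : ℂ))) with hF2
  have hFsum : Summable (Function.uncurry F2) := by
    apply Summable.of_norm
    refine (summable_part1 N hN s).congr fun p => ?_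
    simp only [Function.uncurry, hF2]
    rw [norm_mul, norm_mul, norm_pow, norm_neg, norm_one, one_pow, one_mul, norm_zpow,
      Complex.norm_natCast, norm_div, norm_mul, Complex.norm_natCast, norm_pow,
      norm_mul, Complex.norm_natCast, Complex.norm_natCast]
    ring
  have hNl : ∀ k l : ℕ, l ≤ k + 1 →
      (N : ℂ) ^ (-(l : ℤ)) = (N : ℂ) ^ (k + 1 - l) / (N : ℂ) ^ (k + 1) := by
    intro k l hl
    rw [eq_div_iff (pow_ne_zero _ hNC), ← zpow_natCast (N : ℂ) (k + 1 - l),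
      ← zpow_natCast (N : ℂ) (k + 1), ← zpow_add₀ hNC]
    congr 1
    omega
  have hD : ∀ k : ℕ, (∑ l ∈ range (k + 2), F2 l k)
      = s ^ (2 * k) * (∏ i ∈ range (k + 1), ((N : ℂ) - (i : ℂ)))
        / (((k.factorial : ℂ) * ((k + 1).factorial : ℂ)) * (N : ℂ) ^ (k + 1)) := by
    intro k
    have hterm : ∀ l ∈ range (k + 2), F2 l k
        = ((-1 : ℂ) ^ l * (stirling1 (k + 1) (k + 1 - l) : ℂ) * (N : ℂ) ^ (k + 1 - l))
          * (s ^ (2 * k) /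
            (((k.factorial : ℂ) * ((k + 1).factorial : ℂ)) * (N : ℂ) ^ (k + 1))) := by
      intro l hl
      have hl' : l ≤ k + 1 := by have := Finset.mem_range.1 hl; omega
      simp only [hF2]
      rw [hNl k l hl']
      ring
    rw [Finset.sum_congr rfl hterm, ← Finset.sum_mul, stirling_reflect N k]
    ring
  have hvanish : ∀ k : ℕ, ∀ l ∉ range (k + 2), F2 l k = 0 := by
    intro k l hl
    have hlge : k + 2 ≤ l := le_of_not_gt (fun h => hl (Finset.mem_range.2 h))
    simp only [hF2]
    rw [show k + 1 - l = 0 by omega, stirling1_succ_zero k]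
    simp
  have hrhs : (∑' l : ℕ, (-1 : ℂ) ^ l * (N : ℂ) ^ (-(l : ℤ)) *
          ∑' k : ℕ, (stirling1 (k + 1) (k + 1 - l) : ℂ) * s ^ (2 * k) /
            (k.factorial * (k + 1).factorial))
      = ∑ j ∈ range N, s ^ (2 * j) * (∏ i ∈ range (j + 1), ((N : ℂ) - (i : ℂ)))
          / (((j.factorial : ℂ) * ((j + 1).factorial : ℂ)) * (N : ℂ) ^ (j + 1)) := by
    calc (∑' l : ℕ, (-1 : ℂ) ^ l * (N : ℂ) ^ (-(l : ℤ)) *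
          ∑' k : ℕ, (stirling1 (k + 1) (k + 1 - l) : ℂ) * s ^ (2 * k) /
            (k.factorial * (k + 1).factorial))
        = ∑' l : ℕ, ∑' k : ℕ, F2 l k := tsum_congr fun l => (tsum_mul_left).symm
      _ = ∑' k : ℕ, ∑' l : ℕ, F2 l k := (hFsum.tsum_comm).symm
      _ = ∑' k : ℕ, ∑ l ∈ range (k + 2), F2 l k :=
          tsum_congr fun k => tsum_eq_sum (hvanish k)
      _ = ∑' k : ℕ, s ^ (2 * k) * (∏ i ∈ range (k + 1), ((N : ℂ) - (i : ℂ)))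
            / (((k.factorial : ℂ) * ((k + 1).factorial : ℂ)) * (N : ℂ) ^ (k + 1)) :=
          tsum_congr fun k => hD k
      _ = ∑ j ∈ range N, s ^ (2 * j) * (∏ i ∈ range (j + 1), ((N : ℂ) - (i : ℂ)))
            / (((j.factorial : ℂ) * ((j + 1).factorial : ℂ)) * (N : ℂ) ^ (j + 1)) := by
          refine tsum_eq_sum fun k hk => ?_
          have hkN : N ≤ k := le_of_not_gt (fun h => hk (Finset.mem_range.2 h))
          rw [Fc_eq_zero N k hkN]
          simp
  rw [integral_gue N hN0 s, comb_main N hN0 s, hrhs]
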